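/- Let Γ_1 and Γ_2 be simple graphs with maximum degrees Δ_1 and Δ_2, and let s be an integer with max{Δ_1,Δ_2} ≤ s ≤ Δ_1+Δ_2+k. If both Γ_1 and Γ_2 contain a defensive k-alliance, then a_{k−s}^d(Γ_1×Γ_2) ≤ min{ a_k^d(Γ_1), a_k^d(Γ_2) }. -/
import Mathlib


open Finset

/-- The number of neighbors that the vertex `v` has inside the set `S`. -/
def degIn {V : Type*} [Fintype V] [DecidableEq V] (G : SimpleGraph V) [DecidableRel G.Adj]
    (S : Finset V) (v : V) : ℕ :=
  (S.filter fun u => G.Adj v u).card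

/-- `S` is a defensive `k`-alliance: `S` is nonempty and every vertex of `S` has at least
`k` more neighbors inside `S` than outside. -/
def IsDefensiveAlliance {V : Type*} [Fintype V] [DecidableEq V] (G : SimpleGraph V)
    [DecidableRel G.Adj] (k : ℤ) (S : Finset V) : Prop :=
  S.Nonempty ∧ ∀ v ∈ S, (degIn G Sᶜ v : ℤ) + k ≤ (degIn G S v : ℤ)

/-- `S` is a dominating set: every vertex outside `S` has a neighbor in `S`. -/
def IsDominatingSet {V : Type*} [Fintype V] [DecidableEq V] (G : SimpleGraph V)
    (S : Finset V) : Prop :=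
  ∀ v ∉ S, ∃ u ∈ S, G.Adj v u

/-- A global defensive `k`-alliance is a defensive `k`-alliance which is a dominating set. -/
def IsGlobalDefensiveAlliance {V : Type*} [Fintype V] [DecidableEq V] (G : SimpleGraph V)
    [DecidableRel G.Adj] (k : ℤ) (S : Finset V) : Prop :=
  IsDefensiveAlliance G k S ∧ IsDominatingSet G S

/-- The defensive `k`-alliance number: the minimum cardinality of a defensive `k`-alliance. -/
noncomputable def defAllianceNum {V : Type*} [Fintype V] [DecidableEq V] (G : SimpleGraph V)
    [DecidableRel G.Adj] (k : ℤ) : ℕ :=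
  sInf {s : ℕ | ∃ S : Finset V, IsDefensiveAlliance G k S ∧ S.card = s}

/-- The global defensive `k`-alliance number. -/
noncomputable def globalDefAllianceNum {V : Type*} [Fintype V] [DecidableEq V] (G : SimpleGraph V)
    [DecidableRel G.Adj] (k : ℤ) : ℕ :=
  sInf {s : ℕ | ∃ S : Finset V, IsGlobalDefensiveAlliance G k S ∧ S.card = s}

/-- A partition of the vertex set all whose parts are defensive `k`-alliances. -/
def IsDefAlliancePartition {V : Type*} [Fintype V] [DecidableEq V] (G : SimpleGraph V)
    [DecidableRel G.Adj] (k : ℤ) (P : Finpartition (univ : Finset V)) : Prop :=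
  ∀ S ∈ P.parts, IsDefensiveAlliance G k S

/-- A partition of the vertex set all whose parts are global defensive `k`-alliances. -/
def IsGlobalDefAlliancePartition {V : Type*} [Fintype V] [DecidableEq V] (G : SimpleGraph V)
    [DecidableRel G.Adj] (k : ℤ) (P : Finpartition (univ : Finset V)) : Prop :=
  ∀ S ∈ P.parts, IsGlobalDefensiveAlliance G k S

/-- The defensive `k`-alliance partition number `ψₖᵈ`. -/
noncomputable def defPartitionNum {V : Type*} [Fintype V] [DecidableEq V] (G : SimpleGraph V)
    [DecidableRel G.Adj] (k : ℤ) : ℕ :=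
  sSup {r : ℕ | ∃ P : Finpartition (univ : Finset V),
    IsDefAlliancePartition G k P ∧ P.parts.card = r}

/-- The global defensive `k`-alliance partition number `ψₖᵍᵈ`. -/
noncomputable def globalDefPartitionNum {V : Type*} [Fintype V] [DecidableEq V]
    (G : SimpleGraph V) [DecidableRel G.Adj] (k : ℤ) : ℕ :=
  sSup {r : ℕ | ∃ P : Finpartition (univ : Finset V),
    IsGlobalDefAlliancePartition G k P ∧ P.parts.card = r}

instance {α β : Type*} [DecidableEq α] [DecidableEq β] (G : SimpleGraph α) (H : SimpleGraph β)
    [DecidableRel G.Adj] [DecidableRel H.Adj] : DecidableRel (G.boxProd H).Adj := fun _ _ =>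
  decidable_of_iff' _ SimpleGraph.boxProd_adj

lemma degIn_add_compl {V : Type*} [Fintype V] [DecidableEq V] (G : SimpleGraph V)
    [DecidableRel G.Adj] (S : Finset V) (v : V) :
    degIn G S v + degIn G Sᶜ v = degIn G univ v := by
  rw [degIn, degIn, degIn, ← Finset.card_union_of_disjoint
    (Finset.disjoint_filter_filter disjoint_compl_right), ← Finset.filter_union,
    Finset.union_compl]

lemma degIn_univ_eq_degree {V : Type*} [Fintype V] [DecidableEq V] (G : SimpleGraph V)
    [DecidableRel G.Adj] (v : V) : degIn G univ v = G.degree v := by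
  rw [SimpleGraph.degree, SimpleGraph.neighborFinset_eq_filter]
  rfl

lemma degIn_prod {α β : Type*} [Fintype α] [Fintype β] [DecidableEq α] [DecidableEq β]
    (G : SimpleGraph α) (H : SimpleGraph β) [DecidableRel G.Adj] [DecidableRel H.Adj]
    (S : Finset α) (b : β) (v : α) :
    degIn (G.boxProd H) (S ×ˢ {b}) (v, b) = degIn G S v := by
  unfold degIn
  have : ((S ×ˢ ({b} : Finset β)).filter fun u => (G.boxProd H).Adj (v, b) u) =
      (S.filter fun u => G.Adj v u) ×ˢ {b} := by
    ext ⟨u, c⟩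
    simp only [Finset.mem_filter, Finset.mem_product, Finset.mem_singleton,
      SimpleGraph.boxProd_adj]
    constructor
    · rintro ⟨⟨hu, rfl⟩, h | h⟩ <;> simp_all [H.irrefl]
    · rintro ⟨⟨hu, h⟩, rfl⟩
      exact ⟨⟨hu, rfl⟩, Or.inl ⟨h, rfl⟩⟩
  rw [this, Finset.card_product, Finset.card_singleton, mul_one]
lemma degIn_prod' {α β : Type*} [Fintype α] [Fintype β] [DecidableEq α] [DecidableEq β]
    (G : SimpleGraph α) (H : SimpleGraph β) [DecidableRel G.Adj] [DecidableRel H.Adj]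
    (T : Finset β) (a : α) (w : β) :
    degIn (G.boxProd H) ({a} ×ˢ T) (a, w) = degIn H T w := by
  unfold degIn
  have : ((({a} : Finset α) ×ˢ T).filter fun u => (G.boxProd H).Adj (a, w) u) =
      {a} ×ˢ (T.filter fun u => H.Adj w u) := by
    ext ⟨c, u⟩
    simp only [Finset.mem_filter, Finset.mem_product, Finset.mem_singleton,
      SimpleGraph.boxProd_adj]
    constructor
    · rintro ⟨⟨rfl, hu⟩, h | h⟩ <;> simp_all [G.irrefl]
    · rintro ⟨rfl, hu, h⟩
      exact ⟨⟨rfl, hu⟩, by tauto⟩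
  rw [this, Finset.card_product, Finset.card_singleton, one_mul]

lemma degIn_boxProd_univ {α β : Type*} [Fintype α] [Fintype β] [DecidableEq α] [DecidableEq β]
    (G : SimpleGraph α) (H : SimpleGraph β) [DecidableRel G.Adj] [DecidableRel H.Adj]
    (v : α) (c : β) :
    degIn (G.boxProd H) univ (v, c) = degIn G univ v + degIn H univ c := by
  have key : (univ.filter fun u => (G.boxProd H).Adj (v, c) u) =
      ((univ ×ˢ {c}).filter fun u => (G.boxProd H).Adj (v, c) u) ∪
      (({v} ×ˢ univ).filter fun u => (G.boxProd H).Adj (v, c) u) := by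
    ext ⟨u, d⟩
    simp only [Finset.mem_filter, Finset.mem_union, Finset.mem_product, Finset.mem_singleton,
      Finset.mem_univ, true_and, and_true, SimpleGraph.boxProd_adj]
    constructor
    · rintro (⟨h, rfl⟩ | ⟨h, rfl⟩)
      · exact Or.inl ⟨rfl, Or.inl ⟨h, rfl⟩⟩
      · exact Or.inr ⟨rfl, Or.inr ⟨h, rfl⟩⟩
    · rintro (⟨rfl, h⟩ | ⟨rfl, h⟩) <;> exact h
  have hdisj : Disjoint ((univ ×ˢ ({c} : Finset β)).filter fun u => (G.boxProd H).Adj (v, c) u)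
      ((({v} : Finset α) ×ˢ univ).filter fun u => (G.boxProd H).Adj (v, c) u) := by
    rw [Finset.disjoint_left]
    rintro ⟨u, d⟩ h1 h2
    simp only [Finset.mem_filter, Finset.mem_product, Finset.mem_singleton, Finset.mem_univ,
      true_and, and_true] at h1 h2
    obtain ⟨rfl, h⟩ := h1
    obtain ⟨rfl, -⟩ := h2
    exact (G.boxProd H).irrefl h
  have e1 := degIn_prod G H univ c v
  have e2 := degIn_prod' G H univ v c
  unfold degIn at *
  rw [key, Finset.card_union_of_disjoint hdisj, e1, e2]

lemma alliance_prod_left {α β : Type*} [Fintype α] [Fintype β] [DecidableEq α] [DecidableEq β]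
    (G : SimpleGraph α) (H : SimpleGraph β) [DecidableRel G.Adj] [DecidableRel H.Adj]
    (k s : ℤ) (hs : (H.maxDegree : ℤ) ≤ s) (S : Finset α) (b : β)
    (hS : IsDefensiveAlliance G k S) :
    IsDefensiveAlliance (G.boxProd H) (k - s) (S ×ˢ {b}) := by
  refine ⟨hS.1.product (Finset.singleton_nonempty b), ?_⟩
  rintro ⟨v, c⟩ hv
  rw [Finset.mem_product, Finset.mem_singleton] at hv
  obtain ⟨hvS, rfl⟩ := hv
  have h1 := hS.2 v hvS
  have h2 := degIn_add_compl G S v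
  have h3 := (degIn_add_compl (G.boxProd H) (S ×ˢ {c}) (v, c)).trans
    (degIn_boxProd_univ G H v c)
  have h5 := degIn_prod G H S c v
  have h6 : (degIn H univ c : ℤ) ≤ s := by
    rw [degIn_univ_eq_degree]
    exact le_trans (by exact_mod_cast H.degree_le_maxDegree c) hs
  dsimp only
  omega

lemma alliance_prod_right {α β : Type*} [Fintype α] [Fintype β] [DecidableEq α] [DecidableEq β]
    (G : SimpleGraph α) (H : SimpleGraph β) [DecidableRel G.Adj] [DecidableRel H.Adj]
    (k s : ℤ) (hs : (G.maxDegree : ℤ) ≤ s) (T : Finset β) (a : α)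
    (hT : IsDefensiveAlliance H k T) :
    IsDefensiveAlliance (G.boxProd H) (k - s) ({a} ×ˢ T) := by
  refine ⟨(Finset.singleton_nonempty a).product hT.1, ?_⟩
  rintro ⟨c, w⟩ hw
  rw [Finset.mem_product, Finset.mem_singleton] at hw
  obtain ⟨rfl, hwT⟩ := hw
  have h1 := hT.2 w hwT
  have h2 := degIn_add_compl H T w
  have h3 := (degIn_add_compl (G.boxProd H) ({c} ×ˢ T) (c, w)).trans
    (degIn_boxProd_univ G H c w)
  have h5 := degIn_prod' G H T c w
  have h6 : (degIn G univ c : ℤ) ≤ s := by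
    rw [degIn_univ_eq_degree]
    exact le_trans (by exact_mod_cast G.degree_le_maxDegree c) hs
  dsimp only
  omega

/-- For `max{Δ₁,Δ₂} ≤ s ≤ Δ₁+Δ₂+k`, if both `Γ₁` and `Γ₂` contain a defensive `k`-alliance,
then `a_{k-s}ᵈ(Γ₁×Γ₂) ≤ min{a_kᵈ(Γ₁), a_kᵈ(Γ₂)}`. -/
theorem statement15 {α β : Type*} [Fintype α] [Fintype β] [DecidableEq α] [DecidableEq β]
    (G : SimpleGraph α) (H : SimpleGraph β) [DecidableRel G.Adj] [DecidableRel H.Adj]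
    (k s : ℤ)
    (hs₁ : (max G.maxDegree H.maxDegree : ℤ) ≤ s)
    (hs₂ : s ≤ (G.maxDegree : ℤ) + (H.maxDegree : ℤ) + k)
    (h₁ : ∃ S : Finset α, IsDefensiveAlliance G k S)
    (h₂ : ∃ S : Finset β, IsDefensiveAlliance H k S) :
    defAllianceNum (G.boxProd H) (k - s) ≤ min (defAllianceNum G k) (defAllianceNum H k) := by
  obtain ⟨Sa, hSa⟩ := h₁
  obtain ⟨Tb, hTb⟩ := h₂
  obtain ⟨a, -⟩ := hSa.1
  obtain ⟨b, -⟩ := hTb.1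
  have hG : (G.maxDegree : ℤ) ≤ s :=
    le_trans (by exact_mod_cast le_max_left G.maxDegree H.maxDegree) hs₁
  have hH : (H.maxDegree : ℤ) ≤ s :=
    le_trans (by exact_mod_cast le_max_right G.maxDegree H.maxDegree) hs₁
  refine le_min ?_ ?_
  · have hne : {n : ℕ | ∃ S : Finset α, IsDefensiveAlliance G k S ∧ S.card = n}.Nonempty :=
      ⟨Sa.card, Sa, hSa, rfl⟩
    obtain ⟨S₀, hS₀, hc⟩ := Nat.sInf_mem hne
    apply Nat.sInf_le
    refine ⟨S₀ ×ˢ {b}, alliance_prod_left G H k s hH S₀ b hS₀, ?_⟩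
    rw [Finset.card_product, Finset.card_singleton, mul_one, hc]
    rfl
  · have hne : {n : ℕ | ∃ S : Finset β, IsDefensiveAlliance H k S ∧ S.card = n}.Nonempty :=
      ⟨Tb.card, Tb, hTb, rfl⟩
    obtain ⟨T₀, hT₀, hc⟩ := Nat.sInf_mem hne
    apply Nat.sInf_le
    refine ⟨{a} ×ˢ T₀, alliance_prod_right G H k s hG T₀ a hT₀, ?_⟩
    rw [Finset.card_product, Finset.card_singleton, one_mul, hc]
    rfl
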